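/- (1) Every nonzero a ∈ L is the support of some state m ∈ 𝒮 (i.e. there is m ∈ 𝒮 with m(x) = 1 if and only if a ≤ x, for all x ∈ L). (2) The support of every pure state in 𝒮 is an atom of L (a nonzero element p such that 0 ≤ q ≤ p implies q = 0 or q = p), and conversely every atom of L is the support of exactly one state in 𝒮, and that state is pure. -/

import Mathlib

/-- A separable, countably orthocomplete, orthomodular orthocomplemented poset:
a bounded partial order with an orthocomplementation `compl` in which every
sequence of pairwise-orthogonal elements has a least upper bound, the
orthomodular law holds, and every pairwise-orthogonal set of nonzero elements
is countable. -/
structure OrthomodularPoset (L : Type*) [PartialOrder L] [BoundedOrder L] where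
  compl : L → L
  compl_compl : ∀ a : L, compl (compl a) = a
  compl_antitone : ∀ a b : L, a ≤ b → compl b ≤ compl a
  lub_compl : ∀ a : L, IsLUB {a, compl a} ⊤
  glb_compl : ∀ a : L, IsGLB {a, compl a} ⊥
  ortho_sup : ∀ f : ℕ → L, (∀ i j : ℕ, i ≠ j → f i ≤ compl (f j)) →
    ∃ s : L, IsLUB (Set.range f) s
  orthomodular : ∀ a b : L, a ≤ b →
    ∃ c : L, IsGLB {b, compl a} c ∧ IsLUB {a, c} b
  separable : ∀ S : Set L, (∀ a ∈ S, a ≠ ⊥) →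
    (∀ a ∈ S, ∀ b ∈ S, a ≠ b → a ≤ compl b) → S.Countable

/-- A probability measure on an orthomodular poset: a `[0,1]`-valued function
with `m(0) = 0`, `m(1) = 1`, that is countably additive on pairwise-orthogonal
sequences (whenever the least upper bound exists). -/
def IsProbMeasure {L : Type*} [PartialOrder L] [BoundedOrder L]
    (P : OrthomodularPoset L) (m : L → ℝ) : Prop :=
  (∀ a : L, 0 ≤ m a ∧ m a ≤ 1) ∧ m ⊥ = 0 ∧ m ⊤ = 1 ∧
    ∀ f : ℕ → L, (∀ i j : ℕ, i ≠ j → f i ≤ P.compl (f j)) →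
      ∀ s : L, IsLUB (Set.range f) s → HasSum (fun i => m (f i)) (m s)

/-- `s` is the support of the state `m`: `m(x) = 1` exactly when `s ≤ x`. -/
def IsSupport {L : Type*} [PartialOrder L] [BoundedOrder L] (m : L → ℝ) (s : L) : Prop :=
  ∀ x : L, m x = 1 ↔ s ≤ x

/-- The state `m` is pure with respect to the set of states `S`: it is in `S`
and is not a nontrivial convex combination of two states in `S`. -/
def PureState {L : Type*} [PartialOrder L] [BoundedOrder L]
    (S : Set (L → ℝ)) (m : L → ℝ) : Prop :=
  m ∈ S ∧ ∀ m₁ ∈ S, ∀ m₂ ∈ S, ∀ t : ℝ, 0 < t → t < 1 →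
    (∀ x : L, m x = t * m₁ x + (1 - t) * m₂ x) → m₁ = m ∧ m₂ = m

namespace OMP
variable {L : Type*} [PartialOrder L] [BoundedOrder L] (P : OrthomodularPoset L)

lemma compl_bot : P.compl ⊥ = ⊤ := by
  refine le_antisymm le_top ((P.lub_compl ⊥).2 ?_)
  rintro x (rfl | rfl)
  · exact bot_le
  · exact le_rfl

lemma le_compl_of_compl_le {a b : L} (h : b ≤ P.compl a) : a ≤ P.compl b := by
  have := P.compl_antitone _ _ h
  rwa [P.compl_compl] at this

lemma pair_add {m : L → ℝ} (hm : IsProbMeasure P m) {x d c : L}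
    (hxd : x ≤ P.compl d) (hlub : IsLUB {x, d} c) : m c = m x + m d := by
  classical
  have hdx : d ≤ P.compl x := le_compl_of_compl_le P hxd
  set f : ℕ → L := fun i => if i = 0 then x else if i = 1 then d else ⊥ with hf
  have hf0 : f 0 = x := rfl
  have hf1 : f 1 = d := rfl
  have hfk : ∀ k : ℕ, f (k + 2) = ⊥ := fun k => rfl
  have hbot : ∀ y : L, y ≤ P.compl ⊥ := fun y => by rw [compl_bot]; exact le_top
  have horth : ∀ i j, i ≠ j → f i ≤ P.compl (f j) := by
    intro i j hij
    match i, j with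
    | 0, 0 => exact absurd rfl hij
    | 0, 1 => rw [hf0, hf1]; exact hxd
    | 0, k + 2 => rw [hf0, hfk]; exact hbot x
    | 1, 0 => rw [hf0, hf1]; exact hdx
    | 1, 1 => exact absurd rfl hij
    | 1, k + 2 => rw [hf1, hfk]; exact hbot d
    | k + 2, j => rw [hfk]; exact bot_le
  have hl : IsLUB (Set.range f) c := by
    constructor
    · rintro y ⟨i, rfl⟩
      match i with
      | 0 => exact hlub.1 (Set.mem_insert _ _)
      | 1 => exact hlub.1 (Set.mem_insert_of_mem _ rfl)
      | k + 2 => rw [hfk]; exact bot_le.trans (hlub.1 (Set.mem_insert _ _))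
    · intro u hu
      refine hlub.2 ?_
      rintro y (rfl | rfl)
      · exact hu ⟨0, rfl⟩
      · exact hu ⟨1, rfl⟩
  have h1 := hm.2.2.2 f horth c hl
  have h2 : HasSum (fun i => m (f i)) (m x + m d) := by
    have h0 : ∀ b ∉ ({0, 1} : Finset ℕ), m (f b) = 0 := by
      intro b hb
      match b with
      | 0 => simp at hb
      | 1 => simp at hb
      | k + 2 => rw [hfk]; exact hm.2.1
    have hs := hasSum_sum_of_ne_finset_zero (s := ({0, 1} : Finset ℕ)) (L := SummationFilter.unconditional ℕ) h0
    rwa [Finset.sum_pair (by norm_num : (0:ℕ) ≠ 1), hf0, hf1] at hs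
  exact h1.unique h2

lemma mono {m : L → ℝ} (hm : IsProbMeasure P m) {a b : L} (hab : a ≤ b) : m a ≤ m b := by
  obtain ⟨d, hglb, hlub⟩ := P.orthomodular a b hab
  have hda : d ≤ P.compl a := hglb.1 (Set.mem_insert_of_mem _ rfl)
  have had : a ≤ P.compl d := le_compl_of_compl_le P hda
  have h := pair_add P hm had hlub
  have h0 := (hm.1 d).1
  linarith

lemma compl_add {m : L → ℝ} (hm : IsProbMeasure P m) (x : L) :
    m x + m (P.compl x) = 1 := by
  have h := pair_add P hm (le_of_eq (P.compl_compl x).symm) (P.lub_compl x)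
  rw [hm.2.2.1] at h
  linarith

lemma exists_maximal_orth (Pred : L → Prop) :
    ∃ T : Set L, (∀ x ∈ T, Pred x ∧ x ≠ ⊥) ∧
      (∀ x ∈ T, ∀ y ∈ T, x ≠ y → x ≤ P.compl y) ∧
      ∀ z : L, Pred z → z ≠ ⊥ → (∀ y ∈ T, z ≤ P.compl y) → z ∈ T := by
  set C : Set (Set L) := {T | (∀ x ∈ T, Pred x ∧ x ≠ ⊥) ∧
      ∀ x ∈ T, ∀ y ∈ T, x ≠ y → x ≤ P.compl y} with hC
  have hz : ∀ c ⊆ C, IsChain (· ⊆ ·) c → ∃ ub ∈ C, ∀ s ∈ c, s ⊆ ub := by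
    intro c hcC hchain
    refine ⟨⋃₀ c, ⟨?_, ?_⟩, fun s hs => Set.subset_sUnion_of_mem hs⟩
    · rintro x ⟨s, hs, hx⟩
      exact (hcC hs).1 x hx
    · rintro x ⟨s, hs, hx⟩ y ⟨s', hs', hy⟩ hxy
      rcases hchain.total hs hs' with h | h
      · exact (hcC hs').2 x (h hx) y hy hxy
      · exact (hcC hs).2 x hx y (h hy) hxy
  obtain ⟨T, hT⟩ := zorn_subset C hz
  refine ⟨T, hT.1.1, hT.1.2, ?_⟩
  intro z hz' hzb hzorth
  have hmem : insert z T ∈ C := by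
    constructor
    · rintro x (rfl | hx)
      · exact ⟨hz', hzb⟩
      · exact hT.1.1 x hx
    · rintro x (rfl | hx) y (rfl | hy) hxy
      · exact absurd rfl hxy
      · exact hzorth y hy
      · exact le_compl_of_compl_le P (hzorth x hx)
      · exact hT.1.2 x hx y hy hxy
  have : insert z T ⊆ T := hT.2 hmem (Set.subset_insert z T)
  exact this (Set.mem_insert z T)

lemma exists_enum {T : Set L} (hT : T.Countable)
    (hbot : ∀ x ∈ T, x ≠ ⊥)
    (horth : ∀ x ∈ T, ∀ y ∈ T, x ≠ y → x ≤ P.compl y) :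
    ∃ f : ℕ → L, (∀ i j, i ≠ j → f i ≤ P.compl (f j)) ∧
      (∀ i, f i ∈ T ∨ f i = ⊥) ∧ ∀ x ∈ T, ∃ i, f i = x := by
  classical
  obtain ⟨e, he⟩ := Set.countable_iff_exists_injective.mp hT
  set f : ℕ → L := fun n => if h : ∃ x : T, e x = n then (h.choose : L) else ⊥ with hf
  have hfT : ∀ (n : ℕ) (h : ∃ x : T, e x = n), f n = (h.choose : L) := fun n h => dif_pos h
  have hmem : ∀ i, f i ∈ T ∨ f i = ⊥ := by
    intro i
    by_cases h : ∃ x : T, e x = i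
    · left; rw [hfT i h]; exact (h.choose).2
    · right; exact dif_neg h
  have hsurj : ∀ x ∈ T, ∃ i, f i = x := by
    intro x hx
    refine ⟨e ⟨x, hx⟩, ?_⟩
    have h : ∃ y : T, e y = e ⟨x, hx⟩ := ⟨⟨x, hx⟩, rfl⟩
    rw [hfT _ h]
    exact congrArg Subtype.val (he h.choose_spec)
  have hinj : ∀ i j, i ≠ j → f i ≠ ⊥ → f j ≠ ⊥ → f i ≠ f j := by
    intro i j hij hi hj hEq
    by_cases h1 : ∃ x : T, e x = i
    · by_cases h2 : ∃ x : T, e x = j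
      · apply hij
        rw [hfT i h1, hfT j h2] at hEq
        have hcc : h1.choose = h2.choose := Subtype.ext hEq
        rw [← h1.choose_spec, ← h2.choose_spec, hcc]
      · exact hj (dif_neg h2)
    · exact hi (dif_neg h1)
  refine ⟨f, ?_, hmem, hsurj⟩
  intro i j hij
  rcases hmem i with hi | hi
  · rcases hmem j with hj | hj
    · exact horth _ hi _ hj (hinj i j hij (hbot _ hi) (hbot _ hj))
    · rw [hj, compl_bot]; exact le_top
  · rw [hi]; exact bot_le

lemma exists_support {m : L → ℝ} (hm : IsProbMeasure P m)
    (hdir : ∀ a b : L, m a = 0 → m b = 0 → ∃ c : L, a ≤ c ∧ b ≤ c ∧ m c = 0) :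
    ∃ s : L, IsSupport m s := by
  obtain ⟨T, hT1, hT2, hTmax⟩ := exists_maximal_orth P (fun x => m x = 0)
  have hTc : T.Countable := P.separable T (fun a ha => (hT1 a ha).2) hT2
  obtain ⟨f, hforth, hfmem, hfsurj⟩ := exists_enum P hTc (fun a ha => (hT1 a ha).2) hT2
  obtain ⟨s, hs⟩ := P.ortho_sup f hforth
  have hnull : ∀ i, m (f i) = 0 := by
    intro i
    rcases hfmem i with h | h
    · exact (hT1 _ h).1
    · rw [h]; exact hm.2.1
  have hms : m s = 0 := by
    have h1 := hm.2.2.2 f hforth s hs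
    have h2 : HasSum (fun i => m (f i)) 0 := by
      have heq : (fun i => m (f i)) = fun _ => (0:ℝ) := funext hnull
      rw [heq]; exact hasSum_zero
    exact h1.unique h2
  have hTle : ∀ x ∈ T, x ≤ s := by
    intro x hx
    obtain ⟨i, hi⟩ := hfsurj x hx
    rw [← hi]; exact hs.1 ⟨i, rfl⟩
  have hmax : ∀ x : L, m x = 0 → x ≤ s := by
    intro x hx
    obtain ⟨c, hxc, hsc, hc0⟩ := hdir x s hx hms
    obtain ⟨d, hdglb, hdlub⟩ := P.orthomodular s c hsc
    have hds : d ≤ P.compl s := hdglb.1 (Set.mem_insert_of_mem _ rfl)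
    have hsd : s ≤ P.compl d := le_compl_of_compl_le P hds
    have hadd := pair_add P hm hsd hdlub
    have hd0 : m d = 0 := by linarith
    have hdbot : d = ⊥ := by
      by_contra hne
      have hin := hTmax d hd0 hne
        (fun y hy => le_trans hds (P.compl_antitone _ _ (hTle y hy)))
      have h1 : d ≤ s := hTle d hin
      have h2 : d ≤ (⊥ : L) := (P.glb_compl s).2 (by rintro y (rfl | rfl) <;> assumption)
      exact hne (le_antisymm h2 bot_le)
    have hcs : c = s := by
      refine le_antisymm (hdlub.2 ?_) (hdlub.1 (Set.mem_insert _ _))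
      rintro y (rfl | rfl)
      · exact le_rfl
      · rw [hdbot]; exact bot_le
    rw [← hcs]; exact hxc
  refine ⟨P.compl s, fun x => ⟨?_, ?_⟩⟩
  · intro h1
    have hc := compl_add P hm x
    have h0 : m (P.compl x) = 0 := by linarith
    have h4 := P.compl_antitone _ _ (hmax _ h0)
    rwa [P.compl_compl] at h4
  · intro hle
    have h1 : P.compl x ≤ s := by
      have := P.compl_antitone _ _ hle
      rwa [P.compl_compl] at this
    have h2 : m (P.compl x) ≤ m s := mono P hm h1
    have h3 := (hm.1 (P.compl x)).1
    have hc := compl_add P hm x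
    linarith

lemma hasSum_half : HasSum (fun i : ℕ => (1/2:ℝ)^(i+1)) 1 := by
  have h := (hasSum_geometric_two).mul_left (1/2 : ℝ)
  have h2 : (1/2 : ℝ) * 2 = 1 := by norm_num
  rw [h2] at h
  have heq : (fun i : ℕ => (1/2:ℝ)^(i+1)) = fun n : ℕ => (1/2 : ℝ) * (1/2)^n :=
    funext fun n => by ring
  rw [heq]; exact h

lemma tsum_half_eq_one_iff {n : ℕ → ℝ} (hn : ∀ i, 0 ≤ n i ∧ n i ≤ 1) :
    (∑' i : ℕ, (1/2:ℝ)^(i+1) * n i) = 1 ↔ ∀ i, n i = 1 := by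
  have hpos : ∀ i : ℕ, (0:ℝ) < (1/2:ℝ)^(i+1) := fun i => by positivity
  have hsum : Summable (fun i : ℕ => (1/2:ℝ)^(i+1)) := hasSum_half.summable
  have hle : ∀ i, (1/2:ℝ)^(i+1) * n i ≤ (1/2:ℝ)^(i+1) :=
    fun i => mul_le_of_le_one_right (hpos i).le (hn i).2
  have hsg : Summable (fun i : ℕ => (1/2:ℝ)^(i+1) * n i) :=
    Summable.of_nonneg_of_le (fun i => mul_nonneg (hpos i).le (hn i).1) hle hsum
  constructor
  · intro h i
    by_contra hne
    have hlt : n i < 1 := lt_of_le_of_ne (hn i).2 hne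
    have hst : (∑' j : ℕ, (1/2:ℝ)^(j+1) * n j) < ∑' j : ℕ, (1/2:ℝ)^(j+1) :=
      Summable.tsum_lt_tsum hle (mul_lt_of_lt_one_right (hpos i) hlt) hsg hsum
    rw [h, hasSum_half.tsum_eq] at hst
    exact lt_irrefl _ hst
  · intro h
    have heq : (fun i : ℕ => (1/2:ℝ)^(i+1) * n i) = fun i : ℕ => (1/2:ℝ)^(i+1) :=
      funext fun i => by rw [h i, mul_one]
    rw [heq, hasSum_half.tsum_eq]

end OMP

/-- (1) Every nonzero element of `L` is the support of some state in `S`.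
(2) The support of every pure state is an atom of `L`, and conversely every
atom is the support of exactly one state in `S`, which is pure. -/
theorem support_atoms {L : Type*} [PartialOrder L] [BoundedOrder L]
    (P : OrthomodularPoset L) (S : Set (L → ℝ))
    (hS : ∀ m ∈ S, IsProbMeasure P m ∧
      ∀ a b : L, m a = 0 → m b = 0 → ∃ c : L, a ≤ c ∧ b ≤ c ∧ m c = 0)
    (hfull : ∀ a b : L, (∀ m ∈ S, m a ≤ m b) → a ≤ b)
    (hconvex : ∀ f : ℕ → (L → ℝ), (∀ i : ℕ, f i ∈ S) →
      ∀ t : ℕ → ℝ, (∀ i : ℕ, 0 < t i) → HasSum t 1 →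
        (fun x : L => ∑' i : ℕ, t i * f i x) ∈ S)
    (hB1 : ∀ a : L, a ≠ ⊥ → ∃ m : L → ℝ, PureState S m ∧ m a = 1)
    (hB2 : ∀ m : L → ℝ, PureState S m → ∀ a : L, IsSupport m a →
      ∀ n ∈ S, n a = 1 → n = m) :
    (∀ a : L, a ≠ ⊥ → ∃ m ∈ S, IsSupport m a) ∧
    (∀ m : L → ℝ, PureState S m → ∀ a : L, IsSupport m a →
      a ≠ ⊥ ∧ ∀ q : L, q ≤ a → q = ⊥ ∨ q = a) ∧
    (∀ a : L, a ≠ ⊥ → (∀ q : L, q ≤ a → q = ⊥ ∨ q = a) →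
      ∃ m : L → ℝ, (m ∈ S ∧ IsSupport m a ∧ PureState S m) ∧
        ∀ n ∈ S, IsSupport n a → n = m) := by
  classical
  -- Part (1)
  have key1 : ∀ a : L, a ≠ ⊥ → ∃ m ∈ S, IsSupport m a := by
    intro a ha
    obtain ⟨m₀, hm₀pure, hm₀a⟩ := hB1 a ha
    obtain ⟨T, hT1, hT2, hTmax⟩ := OMP.exists_maximal_orth P
      (fun x => x ≤ a ∧ ∃ mm ∈ S, IsSupport mm x)
    have hTc : T.Countable := P.separable T (fun x hx => (hT1 x hx).2) hT2
    obtain ⟨f, hforth, hfmem, hfsurj⟩ := OMP.exists_enum P hTc (fun x hx => (hT1 x hx).2) hT2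
    have hchoice : ∀ i : ℕ, ∃ mm : L → ℝ, mm ∈ S ∧ mm a = 1 ∧
        (f i ≠ ⊥ → IsSupport mm (f i)) := by
      intro i
      rcases hfmem i with h | h
      · obtain ⟨mm, hmmS, hmm⟩ := (hT1 _ h).1.2
        exact ⟨mm, hmmS, (hmm a).2 (hT1 _ h).1.1, fun _ => hmm⟩
      · exact ⟨m₀, hm₀pure.1, hm₀a, fun hne => absurd h hne⟩
    choose n hnS hna hnsup using hchoice
    set m : L → ℝ := fun x => ∑' i : ℕ, (1/2:ℝ)^(i+1) * n i x with hm
    have hmS : m ∈ S := hconvex n hnS _ (fun i => by positivity) OMP.hasSum_half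
    have hbounds : ∀ (x : L) (i : ℕ), 0 ≤ n i x ∧ n i x ≤ 1 :=
      fun x i => ((hS _ (hnS i)).1).1 x
    have hm_one : ∀ x : L, m x = 1 ↔ ∀ i, n i x = 1 := fun x =>
      OMP.tsum_half_eq_one_iff (fun i => hbounds x i)
    have hma : m a = 1 := (hm_one a).2 hna
    obtain ⟨s, hsupp⟩ := OMP.exists_support P (hS m hmS).1 (hS m hmS).2
    have hsa : s ≤ a := (hsupp a).1 hma
    have hn_s : ∀ i, n i s = 1 := (hm_one s).1 ((hsupp s).2 le_rfl)
    have hTle : ∀ x ∈ T, x ≤ s := by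
      intro x hx
      obtain ⟨i, hi⟩ := hfsurj x hx
      have hfi : f i ≠ ⊥ := by rw [hi]; exact (hT1 x hx).2
      have hle : f i ≤ s := ((hnsup i hfi) s).1 (hn_s i)
      rwa [hi] at hle
    by_cases hsea : s = a
    · exact ⟨m, hmS, hsea ▸ hsupp⟩
    · exfalso
      obtain ⟨d, hdglb, hdlub⟩ := P.orthomodular s a hsa
      have hdbot : d ≠ ⊥ := by
        intro hd
        apply hsea
        refine le_antisymm hsa (hdlub.2 ?_)
        rintro y (rfl | rfl)
        · exact le_rfl
        · rw [hd]; exact bot_le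
      obtain ⟨m', hm'pure, hm'd⟩ := hB1 d hdbot
      obtain ⟨s', hs'supp⟩ := OMP.exists_support P (hS m' hm'pure.1).1 (hS m' hm'pure.1).2
      have hs'd : s' ≤ d := (hs'supp d).1 hm'd
      have hs'bot : s' ≠ ⊥ := by
        intro h
        have h1 : m' ⊥ = 1 := (hs'supp ⊥).2 (le_of_eq h)
        have h0 := (hS m' hm'pure.1).1.2.1
        linarith
      have hdc : d ≤ P.compl s := hdglb.1 (Set.mem_insert_of_mem _ rfl)
      have hda : d ≤ a := hdglb.1 (Set.mem_insert _ _)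
      have hin := hTmax s' ⟨le_trans hs'd hda, m', hm'pure.1, hs'supp⟩ hs'bot
        (fun y hy => le_trans (le_trans hs'd hdc) (P.compl_antitone _ _ (hTle y hy)))
      have h1 : s' ≤ s := hTle s' hin
      have h2 : s' ≤ P.compl s := le_trans hs'd hdc
      have h3 : s' ≤ (⊥ : L) := (P.glb_compl s).2 (by rintro y (rfl | rfl) <;> assumption)
      exact hs'bot (le_antisymm h3 bot_le)
  -- Part (2a)
  have key2 : ∀ m : L → ℝ, PureState S m → ∀ a : L, IsSupport m a →
      a ≠ ⊥ ∧ ∀ q : L, q ≤ a → q = ⊥ ∨ q = a := by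
    intro m hmpure a hsupp
    have hmS := hmpure.1
    have hprob := (hS m hmS).1
    have habot : a ≠ ⊥ := by
      intro h
      have h1 : m ⊥ = 1 := (hsupp ⊥).2 (le_of_eq h)
      have h0 : m ⊥ = 0 := hprob.2.1
      linarith
    refine ⟨habot, fun q hq => ?_⟩
    by_cases hqbot : q = ⊥
    · exact Or.inl hqbot
    right
    obtain ⟨m₁, hm₁S, hm₁supp⟩ := key1 q hqbot
    obtain ⟨d, hdglb, hdlub⟩ := P.orthomodular q a hq
    by_cases hdbot : d = ⊥
    · refine le_antisymm hq (hdlub.2 ?_)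
      rintro y (rfl | rfl)
      · exact le_rfl
      · rw [hdbot]; exact bot_le
    · exfalso
      obtain ⟨m₂, hm₂S, hm₂supp⟩ := key1 d hdbot
      set nn : ℕ → (L → ℝ) := fun i => if i = 0 then m₁ else m₂ with hnn
      have hnn0 : nn 0 = m₁ := rfl
      have hnnsucc : ∀ b : ℕ, nn (b + 1) = m₂ := fun b => if_neg (Nat.succ_ne_zero b)
      have hnnS : ∀ i, nn i ∈ S := by
        intro i
        match i with
        | 0 => rw [hnn0]; exact hm₁S
        | b + 1 => rw [hnnsucc]; exact hm₂S
      have hm'S := hconvex nn hnnS (fun i => (1/2:ℝ)^(i+1)) (fun i => by positivity)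
        OMP.hasSum_half
      set m' : L → ℝ := fun x => ∑' i : ℕ, (1/2:ℝ)^(i+1) * nn i x with hm'
      have hval : ∀ x : L, m' x = (1/2) * m₁ x + (1/2) * m₂ x := by
        intro x
        have hb : ∀ i : ℕ, 0 ≤ nn i x ∧ nn i x ≤ 1 := fun i => ((hS _ (hnnS i)).1).1 x
        have hpos : ∀ i : ℕ, (0:ℝ) < (1/2:ℝ)^(i+1) := fun i => by positivity
        have hsumm : Summable (fun i : ℕ => (1/2:ℝ)^(i+1) * nn i x) :=
          Summable.of_nonneg_of_le (fun i => mul_nonneg (hpos i).le (hb i).1)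
            (fun i => mul_le_of_le_one_right (hpos i).le (hb i).2) OMP.hasSum_half.summable
        have hsplit := Summable.tsum_eq_zero_add hsumm
        have htail : (∑' b : ℕ, (1/2:ℝ)^(b+1+1) * nn (b+1) x) = (1/2) * m₂ x := by
          have heq : (fun b : ℕ => (1/2:ℝ)^(b+1+1) * nn (b+1) x)
              = fun b : ℕ => ((1/4:ℝ) * (1/2)^b) * m₂ x := by
            funext b; rw [hnnsucc b]; ring
          rw [heq, tsum_mul_right]
          have h4 : (∑' b : ℕ, (1/4:ℝ) * (1/2)^b) = 1/2 := by
            rw [tsum_mul_left, tsum_geometric_two]; norm_num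
          rw [h4]
        show (∑' i : ℕ, (1/2:ℝ)^(i+1) * nn i x) = (1/2) * m₁ x + (1/2) * m₂ x
        rw [hsplit, htail, hnn0]
        norm_num
      have hm'a : m' a = 1 := by
        rw [hval a, (hm₁supp a).2 hq, (hm₂supp a).2 (hdglb.1 (Set.mem_insert _ _))]
        norm_num
      have hm'm : m' = m := hB2 m hmpure a hsupp m' hm'S hm'a
      have hdecomp : ∀ x : L, m x = (1/2) * m₁ x + (1 - (1/2)) * m₂ x := by
        intro x
        rw [← hm'm, hval x]
        norm_num
      obtain ⟨h1, h2⟩ := hmpure.2 m₁ hm₁S m₂ hm₂S (1/2) (by norm_num) (by norm_num) hdecomp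
      have e1 : m₁ q = 1 := (hm₁supp q).2 le_rfl
      have hdq : d ≤ P.compl q := hdglb.1 (Set.mem_insert_of_mem _ rfl)
      have e2 : m₂ (P.compl q) = 1 := (hm₂supp _).2 hdq
      have e3 := OMP.compl_add P (hS m₂ hm₂S).1 q
      have e4 : m₂ q = 0 := by linarith
      rw [h1] at e1
      rw [h2] at e4
      linarith
  -- Part (2b)
  have key3 : ∀ a : L, a ≠ ⊥ → (∀ q : L, q ≤ a → q = ⊥ ∨ q = a) →
      ∃ m : L → ℝ, (m ∈ S ∧ IsSupport m a ∧ PureState S m) ∧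
        ∀ n ∈ S, IsSupport n a → n = m := by
    intro a ha hatom
    obtain ⟨m, hmpure, hma⟩ := hB1 a ha
    have hmS := hmpure.1
    obtain ⟨s, hsupp⟩ := OMP.exists_support P (hS m hmS).1 (hS m hmS).2
    have hsa : s ≤ a := (hsupp a).1 hma
    have hsbot : s ≠ ⊥ := by
      intro h
      have h1 : m ⊥ = 1 := (hsupp ⊥).2 (le_of_eq h)
      have h0 := (hS m hmS).1.2.1
      linarith
    have hseq : s = a := (hatom s hsa).resolve_left hsbot
    have hsupa : IsSupport m a := hseq ▸ hsupp
    exact ⟨m, ⟨hmS, hsupa, hmpure⟩,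
      fun n hnS hnsupp => hB2 m hmpure a hsupa n hnS ((hnsupp a).2 le_rfl)⟩
  exact ⟨key1, key2, key3⟩
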